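/- Let n ≥ 3 and consider any coloring model on n vertices with at most 2 colors per vertex whose induced random graph distribution satisfies Pr[X_e] > 1/4 for every unordered pair e of distinct vertices. Then the sampled graph is connected with positive probability. -/

import Mathlib

open scoped Classical

structure ColoringModel (n : ℕ) where
  Ω : Fin n → Type
  fin : ∀ v, Fintype (Ω v)
  p : ∀ v, Ω v → ℝ
  nonneg : ∀ v ω, 0 ≤ p v ω
  sum_one : ∀ v, ∑ ω ∈ @Finset.univ (Ω v) (fin v), p v ω = 1
  f : ∀ u v : Fin n, Ω u → Ω v → Bool
  symm : ∀ u v x y, f u v x y = f v u y x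

def ColoringModel.graph {n : ℕ} (M : ColoringModel n) (ω : ∀ v, M.Ω v) :
    SimpleGraph (Fin n) where
  Adj u v := u ≠ v ∧ M.f u v (ω u) (ω v) = true
  symm := ⟨by
    rintro u v ⟨h1, h2⟩
    refine ⟨h1.symm, ?_⟩
    rw [M.symm]
    exact h2⟩
  loopless := ⟨fun u h => h.1 rfl⟩

noncomputable def ColoringModel.pr {n : ℕ} (M : ColoringModel n)
    (P : SimpleGraph (Fin n) → Prop) : ℝ :=
  letI := M.fin
  ∑ ω : (∀ v, M.Ω v), if P (M.graph ω) then ∏ v, M.p v (ω v) else 0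

noncomputable def ColoringModel.dist {n : ℕ} (M : ColoringModel n)
    (G : SimpleGraph (Fin n)) : ℝ :=
  M.pr (fun H => H = G)

attribute [local instance] ColoringModel.fin

namespace TwoColorUB

variable {n : ℕ} (M : ColoringModel n)

lemma prod_delta (u : Fin n) (s : M.Ω u) (ω : ∀ w, M.Ω w) :
    (∏ w, (if h : w = u then (if cast (congrArg M.Ω h) (ω w) = s then (1:ℝ) else 0) else 1))
      = if ω u = s then (1:ℝ) else 0 := by
  rw [Fintype.prod_dite_eq' u (fun w h => if cast (congrArg M.Ω h) (ω w) = s then (1:ℝ) else 0)]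
  simp

lemma inner_core (u v : Fin n) (huv : u ≠ v) (s : M.Ω u) (t : M.Ω v) :
    ∑ ω : (∀ w, M.Ω w), (if ω u = s then (if ω v = t then (∏ w, M.p w (ω w)) else 0) else 0)
      = M.p u s * M.p v t := by
  have key : ∀ ω : (∀ w, M.Ω w),
      (if ω u = s then (if ω v = t then (∏ w, M.p w (ω w)) else 0) else 0)
        = ∏ w, (M.p w (ω w)
            * (if h : w = u then (if cast (congrArg M.Ω h) (ω w) = s then (1:ℝ) else 0) else 1)
            * (if h : w = v then (if cast (congrArg M.Ω h) (ω w) = t then (1:ℝ) else 0) else 1)) := by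
    intro ω
    rw [Finset.prod_mul_distrib, Finset.prod_mul_distrib, prod_delta, prod_delta]
    by_cases h1 : ω u = s <;> by_cases h2 : ω v = t <;> simp [h1, h2]
  rw [Finset.sum_congr rfl (fun ω _ => key ω), ← Fintype.prod_sum
    (fun w x => M.p w x
      * (if h : w = u then (if cast (congrArg M.Ω h) x = s then (1:ℝ) else 0) else 1)
      * (if h : w = v then (if cast (congrArg M.Ω h) x = t then (1:ℝ) else 0) else 1))]
  rw [← Finset.mul_prod_erase _ _ (Finset.mem_univ u),
    ← Finset.mul_prod_erase _ _ (Finset.mem_erase.mpr ⟨Ne.symm huv, Finset.mem_univ v⟩)]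
  have hu : (∑ x : M.Ω u, (M.p u x
      * (if h : u = u then (if cast (congrArg M.Ω h) x = s then (1:ℝ) else 0) else 1)
      * (if h : u = v then (if cast (congrArg M.Ω h) x = t then (1:ℝ) else 0) else 1)))
      = M.p u s := by
    simp [huv, mul_ite]
  have hv : (∑ x : M.Ω v, (M.p v x
      * (if h : v = u then (if cast (congrArg M.Ω h) x = s then (1:ℝ) else 0) else 1)
      * (if h : v = v then (if cast (congrArg M.Ω h) x = t then (1:ℝ) else 0) else 1)))
      = M.p v t := by
    simp [Ne.symm huv, mul_ite]
  have hrest : (∏ w ∈ (Finset.univ.erase u).erase v, (∑ x : M.Ω w, (M.p w x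
      * (if h : w = u then (if cast (congrArg M.Ω h) x = s then (1:ℝ) else 0) else 1)
      * (if h : w = v then (if cast (congrArg M.Ω h) x = t then (1:ℝ) else 0) else 1))))
      = 1 := by
    apply Finset.prod_eq_one
    intro w hw
    have hwv : w ≠ v := Finset.ne_of_mem_erase hw
    have hwu : w ≠ u := Finset.ne_of_mem_erase (Finset.mem_of_mem_erase hw)
    simp [hwu, hwv, M.sum_one w]
  rw [hu, hv, hrest, mul_one]

lemma two_point (u v : Fin n) (huv : u ≠ v) (φ : M.Ω u → M.Ω v → ℝ) :
    ∑ ω : (∀ w, M.Ω w), (∏ w, M.p w (ω w)) * φ (ω u) (ω v)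
      = ∑ s : M.Ω u, ∑ t : M.Ω v, (M.p u s * M.p v t) * φ s t := by
  have expand : ∀ ω : (∀ w, M.Ω w), (∏ w, M.p w (ω w)) * φ (ω u) (ω v)
      = ∑ s : M.Ω u, ∑ t : M.Ω v,
          (if ω u = s then (if ω v = t then (∏ w, M.p w (ω w)) else 0) else 0) * φ s t := by
    intro ω
    have h1 : ∀ (s' : M.Ω u) (t' : M.Ω v),
        (if ω u = s' then (if ω v = t' then (∏ w, M.p w (ω w)) else 0) else 0) * φ s' t'
          = (if ω u = s' then (if ω v = t' then (∏ w, M.p w (ω w)) * φ s' t' else 0) else 0) := by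
      intro s' t'; split_ifs <;> ring
    simp [h1, Finset.sum_ite_irrel]
  rw [Finset.sum_congr rfl (fun ω _ => expand ω), Finset.sum_comm]
  refine Finset.sum_congr rfl fun s _ => ?_
  rw [Finset.sum_comm]
  refine Finset.sum_congr rfl fun t _ => ?_
  rw [← Finset.sum_mul, inner_core M u v huv s t]

lemma qf (maj mn : ∀ v : Fin n, M.Ω v) (A B : Fin n → ℝ)
    (hsum : ∀ (v : Fin n) (G : M.Ω v → ℝ),
      ∑ s : M.Ω v, M.p v s * G s = A v * G (maj v) + B v * G (mn v))
    (u v : Fin n) (huv : u ≠ v) :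
    M.pr (fun G => G.Adj u v)
      = A u * (A v * (if M.f u v (maj u) (maj v) then (1:ℝ) else 0)
             + B v * (if M.f u v (maj u) (mn v) then (1:ℝ) else 0))
      + B u * (A v * (if M.f u v (mn u) (maj v) then (1:ℝ) else 0)
             + B v * (if M.f u v (mn u) (mn v) then (1:ℝ) else 0)) := by
  have step1 : ∀ ω : (∀ w, M.Ω w),
      (if (M.graph ω).Adj u v then (∏ w, M.p w (ω w)) else 0)
        = (∏ w, M.p w (ω w)) * (if M.f u v (ω u) (ω v) then (1:ℝ) else 0) := by
    intro ω
    by_cases h : M.f u v (ω u) (ω v) = true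
    · rw [if_pos h, mul_one, if_pos ⟨huv, h⟩]
    · rw [if_neg h, mul_zero, if_neg (fun hadj => h hadj.2)]
  show (∑ ω : (∀ w, M.Ω w), if (M.graph ω).Adj u v then (∏ w, M.p w (ω w)) else 0) = _
  rw [Finset.sum_congr rfl (fun ω _ => step1 ω),
    two_point M u v huv (fun s t => if M.f u v s t then (1:ℝ) else 0)]
  have h2 : ∀ s : M.Ω u, (∑ t : M.Ω v, (M.p u s * M.p v t) * (if M.f u v s t then (1:ℝ) else 0))
      = M.p u s * (∑ t : M.Ω v, M.p v t * (if M.f u v s t then (1:ℝ) else 0)) := by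
    intro s; rw [Finset.mul_sum]; exact Finset.sum_congr rfl fun t _ => by ring
  rw [Finset.sum_congr rfl (fun s _ => h2 s),
    hsum u (fun s => ∑ t : M.Ω v, M.p v t * (if M.f u v s t then (1:ℝ) else 0)),
    hsum v (fun t => if M.f u v (maj u) t then (1:ℝ) else 0),
    hsum v (fun t => if M.f u v (mn u) t then (1:ℝ) else 0)]

end TwoColorUB
namespace TwoColorUB

variable {n : ℕ} (M : ColoringModel n)

lemma pr_pos (P : SimpleGraph (Fin n) → Prop) (ω₀ : ∀ v, M.Ω v)
    (hP : P (M.graph ω₀)) (hpos : 0 < ∏ w, M.p w (ω₀ w)) : 0 < M.pr P := by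
  unfold ColoringModel.pr
  apply Finset.sum_pos'
  · intro ω _
    split_ifs
    · exact Finset.prod_nonneg fun w _ => M.nonneg w (ω w)
    · exact le_refl 0
  · refine ⟨ω₀, Finset.mem_univ _, ?_⟩
    rw [if_pos hP]
    exact hpos

end TwoColorUB

theorem two_color_upper_bound (n : ℕ) (hn : 3 ≤ n) (M : ColoringModel n)
    (hcols : ∀ v, Nat.card (M.Ω v) ≤ 2)
    (hmarg : ∀ u v : Fin n, u ≠ v → 1 / 4 < M.pr (fun G => G.Adj u v)) :
    0 < M.pr (fun G => G.Connected) := by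
  classical
  by_contra hcon
  haveI hne : ∀ v, Nonempty (M.Ω v) := by
    intro v
    by_contra h
    haveI : IsEmpty (M.Ω v) := not_nonempty_iff.mp h
    have h1 := M.sum_one v
    simp [Finset.univ_eq_empty] at h1
  have hcard : ∀ v, Fintype.card (M.Ω v) ≤ 2 := fun v => by
    rw [← Nat.card_eq_fintype_card]; exact hcols v
  have hmaj0 : ∀ v : Fin n, ∃ m : M.Ω v, ∀ s, M.p v s ≤ M.p v m := by
    intro v
    obtain ⟨m, _, hm⟩ := Finset.exists_max_image Finset.univ (M.p v) Finset.univ_nonempty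
    exact ⟨m, fun s => hm s (Finset.mem_univ s)⟩
  choose maj hmaj using hmaj0
  set A : Fin n → ℝ := fun v => M.p v (maj v) with hA
  set B : Fin n → ℝ := fun v => 1 - A v with hB
  have hA_half : ∀ v, 1/2 ≤ A v := by
    intro v
    have h1 : (1:ℝ) = ∑ s : M.Ω v, M.p v s := (M.sum_one v).symm
    have h2 : ∑ s : M.Ω v, M.p v s ≤ (Fintype.card (M.Ω v) : ℕ) • (A v) :=
      Finset.sum_le_card_nsmul _ _ _ (fun s _ => hmaj v s)
    have h3 : ((Fintype.card (M.Ω v) : ℕ) : ℝ) * A v ≤ 2 * A v := by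
      apply mul_le_mul_of_nonneg_right _ (M.nonneg v (maj v))
      exact_mod_cast hcard v
    rw [nsmul_eq_mul] at h2
    linarith
  have hA_one : ∀ v, A v ≤ 1 := by
    intro v
    have h1 := Finset.single_le_sum (f := M.p v) (fun s _ => M.nonneg v s)
      (Finset.mem_univ (maj v))
    rw [M.sum_one v] at h1
    exact h1
  have hA_pos : ∀ v, 0 < A v := fun v => lt_of_lt_of_le (by norm_num) (hA_half v)
  have hB_nonneg : ∀ v, 0 ≤ B v := fun v => by simp [hB]; linarith [hA_one v]
  have hB_half : ∀ v, B v ≤ 1/2 := fun v => by simp [hB]; linarith [hA_half v]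
  have hAB : ∀ v, A v * B v ≤ 1/4 := fun v => by
    have := hA_one v; have := hA_half v; simp [hB]; nlinarith
  have hmn0 : ∀ v : Fin n, ∃ z : M.Ω v, 0 < M.p v z ∧
      ∀ t, t ≠ maj v → t ≠ z → M.p v t = 0 := by
    intro v
    by_cases h : ∃ s, s ≠ maj v ∧ 0 < M.p v s
    · obtain ⟨s, hs1, hs2⟩ := h
      refine ⟨s, hs2, fun t ht1 ht2 => ?_⟩
      by_contra htp
      have htpos : 0 < M.p v t := lt_of_le_of_ne (M.nonneg v t) (Ne.symm htp)
      have hcard3 : ({t, s, maj v} : Finset (M.Ω v)).card = 3 := by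
        rw [Finset.card_insert_of_notMem (by simp [ht2, ht1]),
          Finset.card_insert_of_notMem (by simp [hs1]), Finset.card_singleton]
      have hle := Finset.card_le_card (Finset.subset_univ ({t, s, maj v} : Finset (M.Ω v)))
      rw [hcard3, Finset.card_univ] at hle
      have := hcard v
      omega
    · push_neg at h
      exact ⟨maj v, hA_pos v, fun t ht1 _ => le_antisymm (h t ht1) (M.nonneg v t)⟩
  choose mn hmn_pos hmn_zero using hmn0
  have hsum : ∀ (v : Fin n) (G : M.Ω v → ℝ),
      ∑ s : M.Ω v, M.p v s * G s = A v * G (maj v) + B v * G (mn v) := by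
    intro v G
    have hsplit : ∑ s : M.Ω v, M.p v s * G s
        = M.p v (maj v) * G (maj v) + ∑ s ∈ Finset.univ.erase (maj v), M.p v s * G s :=
      (Finset.add_sum_erase _ _ (Finset.mem_univ (maj v))).symm
    have hsplit1 : (1:ℝ) = M.p v (maj v) + ∑ s ∈ Finset.univ.erase (maj v), M.p v s := by
      rw [← M.sum_one v]
      exact (Finset.add_sum_erase _ _ (Finset.mem_univ (maj v))).symm
    by_cases hc : mn v = maj v
    · have hz : ∀ s ∈ Finset.univ.erase (maj v), M.p v s * G s = 0 := by
        intro s hs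
        rw [hmn_zero v s (Finset.ne_of_mem_erase hs) (hc ▸ Finset.ne_of_mem_erase hs), zero_mul]
      have hz2 : ∀ s ∈ Finset.univ.erase (maj v), M.p v s = 0 := by
        intro s hs
        exact hmn_zero v s (Finset.ne_of_mem_erase hs) (hc ▸ Finset.ne_of_mem_erase hs)
      rw [hsplit, Finset.sum_eq_zero hz]
      rw [Finset.sum_eq_zero hz2] at hsplit1
      have hb0 : B v = 0 := by simp [hB, hA]; linarith
      rw [hb0, hc]; ring
    · have hz : ∀ s ∈ Finset.univ.erase (maj v), s ≠ mn v → M.p v s * G s = 0 := by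
        intro s hs hsmn
        rw [hmn_zero v s (Finset.ne_of_mem_erase hs) hsmn, zero_mul]
      have hmem : mn v ∈ Finset.univ.erase (maj v) := Finset.mem_erase.mpr ⟨hc, Finset.mem_univ _⟩
      rw [hsplit, Finset.sum_eq_single_of_mem (mn v) hmem hz]
      have hz2 : ∀ s ∈ Finset.univ.erase (maj v), s ≠ mn v → M.p v s = 0 := by
        intro s hs hsmn
        exact hmn_zero v s (Finset.ne_of_mem_erase hs) hsmn
      rw [Finset.sum_eq_single_of_mem (mn v) hmem hz2] at hsplit1
      have : M.p v (mn v) = B v := by simp [hB, hA]; linarith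
      rw [this]
  have hq := fun (u v : Fin n) (huv : u ≠ v) => TwoColorUB.qf M maj mn A B hsum u v huv
  -- pair lemmas
  have pairBB : ∀ u v : Fin n, u ≠ v → ¬(M.f u v (maj u) (maj v) = true) →
      ¬(M.f u v (maj u) (mn v) = true) → ¬(M.f u v (mn u) (maj v) = true) → False := by
    intro u v huv h1 h2 h3
    have hm := hmarg u v huv
    rw [hq u v huv, if_neg h1, if_neg h2, if_neg h3] at hm
    set I := (if M.f u v (mn u) (mn v) then (1:ℝ) else 0) with hIdef
    have hI : I ≤ 1 := by rw [hIdef]; split_ifs <;> norm_num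
    have hI0 : (0:ℝ) ≤ I := by rw [hIdef]; split_ifs <;> norm_num
    have hstep : A u * (A v * 0 + B v * 0) + B u * (A v * 0 + B v * I) = B u * B v * I := by
      ring
    rw [hstep] at hm
    have k0 : 0 ≤ B u * B v * (1 - I) :=
      mul_nonneg (mul_nonneg (hB_nonneg u) (hB_nonneg v)) (by linarith)
    have k2 : B u * B v ≤ 1/2 * B v := mul_le_mul_of_nonneg_right (hB_half u) (hB_nonneg v)
    nlinarith [k0, k2, hB_half v]
  have pairPure : ∀ u v : Fin n, u ≠ v → ¬(M.f u v (maj u) (maj v) = true) →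
      ¬(M.f u v (maj u) (mn v) = true) → ¬(M.f u v (mn u) (mn v) = true) →
      1/4 < B u * A v := by
    intro u v huv h1 h2 h3
    have hm := hmarg u v huv
    rw [hq u v huv, if_neg h1, if_neg h2, if_neg h3] at hm
    set I := (if M.f u v (mn u) (maj v) then (1:ℝ) else 0) with hIdef
    have hI : I ≤ 1 := by rw [hIdef]; split_ifs <;> norm_num
    have hI0 : (0:ℝ) ≤ I := by rw [hIdef]; split_ifs <;> norm_num
    have hstep : A u * (A v * 0 + B v * 0) + B u * (A v * I + B v * 0) = B u * A v * I := by
      ring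
    rw [hstep] at hm
    have k0 : 0 ≤ B u * A v * (1 - I) :=
      mul_nonneg (mul_nonneg (hB_nonneg u) (le_of_lt (hA_pos v))) (by linarith)
    nlinarith [k0]
  -- assignments and graphs
  set xA : Set (Fin n) → (∀ w, M.Ω w) := fun S w => if w ∈ S then maj w else mn w with hxA
  have hxAin : ∀ (S : Set (Fin n)) (w : Fin n), w ∈ S → xA S w = maj w := by
    intro S w hw; simp only [hxA]; rw [if_pos hw]
  have hxAout : ∀ (S : Set (Fin n)) (w : Fin n), w ∉ S → xA S w = mn w := by
    intro S w hw; simp only [hxA]; rw [if_neg hw]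
  have master : ∀ S : Set (Fin n), ¬ (M.graph (xA S)).Connected := by
    intro S hCon
    apply hcon
    apply TwoColorUB.pr_pos M _ (xA S) hCon
    apply Finset.prod_pos
    intro w _
    by_cases hw : w ∈ S
    · rw [hxAin S w hw]; exact hA_pos w
    · rw [hxAout S w hw]; exact hmn_pos w
  set Mg : SimpleGraph (Fin n) := M.graph (xA Set.univ) with hMg
  set Rv : Fin n → Set (Fin n) := fun v => {w | Mg.Reachable v w} with hRv
  set Gv : Fin n → SimpleGraph (Fin n) := fun v => M.graph (xA (Rv v)) with hGv
  have hMadj : ∀ a b : Fin n, Mg.Adj a b ↔ (a ≠ b ∧ M.f a b (maj a) (maj b) = true) := by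
    intro a b
    have : Mg.Adj a b ↔ (a ≠ b ∧ M.f a b (xA Set.univ a) (xA Set.univ b) = true) := Iff.rfl
    rw [this, hxAin _ a (Set.mem_univ a), hxAin _ b (Set.mem_univ b)]
  have reach_in : ∀ v w, Mg.Reachable v w → (Gv v).Reachable v w := by
    intro v w h
    have key : ∀ (y z : Fin n) (p : Mg.Walk y z), Mg.Reachable v y → (Gv v).Reachable y z := by
      intro y z p
      induction p with
      | nil => exact fun _ => SimpleGraph.Reachable.refl _
      | @cons a b c hadj p ih =>
        intro ha
        have hb : Mg.Reachable v b := ha.trans hadj.reachable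
        have hab : (Gv v).Adj a b := by
          refine ⟨((hMadj a b).mp hadj).1, ?_⟩
          rw [hxAin (Rv v) a ha, hxAin (Rv v) b hb]
          exact ((hMadj a b).mp hadj).2
        exact (hab.reachable).trans (ih hb)
    obtain ⟨p⟩ := h
    exact key v w p (SimpleGraph.Reachable.refl _)
  set Zv : Fin n → Set (Fin n) := fun v => {z | ¬ (Gv v).Reachable v z} with hZv
  have hZa : ∀ v z, z ∈ Zv v → ¬ Mg.Reachable v z := by
    intro v z hz hr
    exact hz (reach_in v z hr)
  have hZne : ∀ v : Fin n, ∃ z, z ∈ Zv v := by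
    intro v
    by_contra h
    push_neg at h
    have hall : ∀ z, (Gv v).Reachable v z := by
      intro z
      by_contra hz
      exact h z hz
    have hconn : (Gv v).Connected := by
      rw [SimpleGraph.connected_iff]
      exact ⟨fun x y => (hall x).symm.trans (hall y), ⟨v⟩⟩
    exact master (Rv v) hconn
  choose N hN using hZne
  have hZb : ∀ v w z, Mg.Reachable v w → z ∈ Zv v → ¬ (M.f w z (maj w) (mn z) = true) := by
    intro v w z hw hz hf
    have hzr : ¬ Mg.Reachable v z := hZa v z hz
    have hwz : w ≠ z := by rintro rfl; exact hzr hw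
    have hadj : (Gv v).Adj w z := by
      refine ⟨hwz, ?_⟩
      rw [hxAin (Rv v) w hw, hxAout (Rv v) z hzr]
      exact hf
    exact hz ((reach_in v w hw).trans hadj.reachable)
  have hZc : ∀ v z z', z ∈ Zv v → ¬ Mg.Reachable v z' → z ≠ z' →
      M.f z z' (mn z) (mn z') = true → z' ∈ Zv v := by
    intro v z z' hz hz' hnzz hf
    intro hr'
    have hadj : (Gv v).Adj z' z := by
      refine ⟨Ne.symm hnzz, ?_⟩
      rw [hxAout (Rv v) z' hz', hxAout (Rv v) z (hZa v z hz), M.symm]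
      exact hf
    exact hz (hr'.trans hadj.reachable)
  -- no good cycles
  have hNOC : ∀ m : ℕ, ∀ u : ℕ → Fin n, 0 < m → (∀ t, u (t + m) = u t) →
      (∀ t, u (t + 1) ∈ Zv (u t)) → False := by
    intro m
    induction m using Nat.strong_induction_on with
    | _ m ih =>
      intro u hm hper hcyc
      have hnr : ∀ t, ¬ Mg.Reachable (u t) (u (t + 1)) := fun t => hZa _ _ (hcyc t)
      have hneq : ∀ t, u t ≠ u (t + 1) := by
        intro t h
        exact hnr t (h ▸ SimpleGraph.Reachable.refl _)
      have hfmm : ∀ t, ¬ (M.f (u t) (u (t+1)) (maj (u t)) (maj (u (t+1))) = true) := by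
        intro t hf
        exact hnr t (SimpleGraph.Adj.reachable ((hMadj (u t) (u (t+1))).mpr ⟨hneq t, hf⟩))
      have hatt : ∀ t, ¬ (M.f (u t) (u (t+1)) (maj (u t)) (mn (u (t+1))) = true) :=
        fun t => hZb (u t) (u t) (u (t+1)) (SimpleGraph.Reachable.refl _) (hcyc t)
      rcases Nat.lt_or_ge m 3 with hm3 | hm3
      · interval_cases m
        · have h0 := hcyc 0
          rw [show u 1 = u 0 from hper 0] at h0
          exact hZa (u 0) (u 0) h0 (SimpleGraph.Reachable.refl _)
        · have h02 : u 0 ∈ Zv (u 1) := by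
            have h2 := hcyc 1
            rwa [show u 2 = u 0 from hper 0] at h2
          have h3 : ¬ (M.f (u 0) (u 1) (mn (u 0)) (maj (u 1)) = true) := by
            intro hf
            apply hZb (u 1) (u 1) (u 0) (SimpleGraph.Reachable.refl _) h02
            rw [M.symm]
            exact hf
          exact pairBB (u 0) (u 1) (hneq 0) (hfmm 0) (hatt 0) h3
      · by_cases hHE : ∃ t, M.f (u t) (u (t+1)) (mn (u t)) (mn (u (t+1))) = true
        · obtain ⟨t, hft⟩ := hHE
          set r := t + m - 1 with hr
          have hr1 : r + 1 = t + m := by omega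
          have hr2 : r + 2 = (t + 1) + m := by omega
          have e1 : u (r+1) = u t := by rw [hr1]; exact hper t
          have e2 : u (r+2) = u (t+1) := by rw [hr2]; exact hper (t+1)
          have hedge : M.f (u (r+1)) (u (r+2)) (mn (u (r+1))) (mn (u (r+2))) = true := by
            rw [e1, e2]; exact hft
          by_cases hre : Mg.Reachable (u r) (u (r+2))
          · have h3 : ¬ (M.f (u (r+1)) (u (r+2)) (mn (u (r+1))) (maj (u (r+2))) = true) := by
              intro hf
              apply hZb (u r) (u (r+2)) (u (r+1)) hre (hcyc r)
              rw [M.symm]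
              exact hf
            exact pairBB (u (r+1)) (u (r+2)) (hneq (r+1)) (hfmm (r+1)) (hatt (r+1)) h3
          · have hzr2 : u (r+2) ∈ Zv (u r) :=
              hZc (u r) (u (r+1)) (u (r+2)) (hcyc r) hre (hneq (r+1)) hedge
            set m' := m - 1 with hm'
            set u' : ℕ → Fin n := fun s => u (r + 2 + s % m') with hu'
            have hper' : ∀ s, u' (s + m') = u' s := by
              intro s
              simp only [hu', Nat.add_mod_right]
            have hcyc' : ∀ s, u' (s + 1) ∈ Zv (u' s) := by
              intro s
              have hmpos : 0 < m' := by omega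
              have h1m : (1:ℕ) % m' = 1 := Nat.mod_eq_of_lt (by omega)
              have hmod : (s + 1) % m' = (s % m' + 1) % m' := by rw [Nat.add_mod, h1m]
              have hlt : s % m' < m' := Nat.mod_lt s hmpos
              simp only [hu']
              rcases Nat.lt_or_ge (s % m' + 1) m' with hc | hc
              · rw [hmod, Nat.mod_eq_of_lt hc,
                  show r + 2 + (s % m' + 1) = (r + 2 + s % m') + 1 by omega]
                exact hcyc _
              · have hceq : s % m' + 1 = m' := by omega
                have hsm : s % m' = m' - 1 := by omega
                rw [hmod, hceq, Nat.mod_self, hsm,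
                  show r + 2 + (m' - 1) = r + m by omega,
                  show r + 2 + 0 = r + 2 by omega,
                  show u (r + m) = u r from hper r]
                exact hzr2
            exact ih m' (by omega) u' (by omega) hper' hcyc'
        · push_neg at hHE
          have hkey : ∀ t, 1/4 < B (u t) * A (u (t+1)) := fun t =>
            pairPure (u t) (u (t+1)) (hneq t) (hfmm t) (hatt t) (hHE t)
          have h1 : ∏ _t ∈ Finset.range m, (1/4 : ℝ)
              < ∏ t ∈ Finset.range m, (B (u t) * A (u (t+1))) := by
            apply Finset.prod_lt_prod_of_nonempty
            · intro i _; norm_num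
            · intro i _; exact hkey i
            · exact Finset.nonempty_range_iff.mpr (by omega)
          have hsh : ∏ t ∈ Finset.range m, A (u (t+1)) = ∏ t ∈ Finset.range m, A (u t) := by
            have hc : (∏ t ∈ Finset.range m, A (u (t+1))) * A (u 0)
                = (∏ t ∈ Finset.range m, A (u t)) * A (u 0) := by
              rw [← Finset.prod_range_succ' (fun t => A (u t)) m, Finset.prod_range_succ]
              rw [show u m = u 0 from by simpa using hper 0]
            exact mul_right_cancel₀ (ne_of_gt (hA_pos (u 0))) hc
          have h2 : ∏ t ∈ Finset.range m, (B (u t) * A (u (t+1)))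
              = ∏ t ∈ Finset.range m, (A (u t) * B (u t)) := by
            rw [Finset.prod_mul_distrib, hsh, Finset.prod_mul_distrib, mul_comm]
          have h3 : ∏ t ∈ Finset.range m, (A (u t) * B (u t))
              ≤ ∏ _t ∈ Finset.range m, (1/4 : ℝ) := by
            apply Finset.prod_le_prod
            · intro i _; exact mul_nonneg (le_of_lt (hA_pos _)) (hB_nonneg _)
            · intro i _; exact hAB _
          rw [h2] at h1
          linarith
  -- construct a good cycle from the orbit of N
  have hv0 : 0 < n := by omega
  obtain ⟨i, j, hij, heq⟩ := Finite.exists_ne_map_eq_of_infinite (fun k : ℕ => N^[k] (⟨0, hv0⟩ : Fin n))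
  have main : ∀ i j : ℕ, i < j → N^[i] (⟨0, hv0⟩ : Fin n) = N^[j] (⟨0, hv0⟩ : Fin n) → False := by
    intro i j hlt heq2
    set v0 : Fin n := (⟨0, hv0⟩ : Fin n)
    set m := j - i with hm
    set u : ℕ → Fin n := fun t => N^[t + i] v0 with hu
    have hper : ∀ t, u (t + m) = u t := by
      intro t
      simp only [hu]
      rw [show t + m + i = t + j by omega, Function.iterate_add_apply N t j v0, ← heq2,
        ← Function.iterate_add_apply N t i v0]
    have hcyc : ∀ t, u (t + 1) ∈ Zv (u t) := by
      intro t
      simp only [hu]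
      rw [show t + 1 + i = (t + i) + 1 by omega, Function.iterate_succ_apply' N (t + i) v0]
      exact hN _
    exact hNOC m u (by omega) hper hcyc
  rcases Nat.lt_or_ge i j with hlt | hge
  · exact main i j hlt heq
  · have hlt : j < i := by omega
    exact main j i hlt heq.symm
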